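/- For every x ∈ ℝ³ with 0 < ‖x‖ < π, letting E = exp(hat(x)) and e_R = (1 / (2·√(1 + tr E))) • vee(E − Eᵀ), one has ‖e_R‖ = sin(‖x‖/2); in particular ‖e_R‖² = sin²(‖x‖/2). -/

import Mathlib

open Matrix Real

/-- The hat map sending `x ∈ ℝ³` to the skew-symmetric matrix with `hat x *ᵥ y = x ×₃ y`. -/
def hat (x : Fin 3 → ℝ) : Matrix (Fin 3) (Fin 3) ℝ :=
  !![0, -x 2, x 1; x 2, 0, -x 0; -x 1, x 0, 0]

/-- The vee map, inverse to `hat` on skew-symmetric matrices. -/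
def vee (S : Matrix (Fin 3) (Fin 3) ℝ) : Fin 3 → ℝ :=
  ![S 2 1, S 0 2, S 1 0]

/-- The Euclidean norm on ℝ³. -/
noncomputable def enorm3 (x : Fin 3 → ℝ) : ℝ := Real.sqrt (∑ i, x i ^ 2)

open scoped Nat

section Aux

lemma hat_transpose (x : Fin 3 → ℝ) : (hat x)ᵀ = -(hat x) := by
  ext i j
  fin_cases i <;> fin_cases j <;> simp [hat]

lemma vee_hat (x : Fin 3 → ℝ) : vee (hat x) = x := by
  funext i; fin_cases i <;> simp [vee, hat]

lemma trace_hat (x : Fin 3 → ℝ) : (hat x).trace = 0 := by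
  simp [Matrix.trace_fin_three, hat]

lemma trace_hat_sq (x : Fin 3 → ℝ) :
    ((hat x) ^ 2).trace = -2 * ∑ i, x i ^ 2 := by
  simp [Matrix.trace_fin_three, pow_two, hat, Matrix.mul_apply, Fin.sum_univ_three]
  ring

lemma hat_cube (x : Fin 3 → ℝ) :
    (hat x) ^ 3 = (-(∑ i, x i ^ 2)) • hat x := by
  ext i j
  fin_cases i <;> fin_cases j <;>
    simp [hat, pow_succ, Matrix.mul_apply, Fin.sum_univ_three] <;> ring

lemma hat_pow_odd (x : Fin 3 → ℝ) (k : ℕ) :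
    (hat x) ^ (2 * k + 1) = ((-(∑ i, x i ^ 2)) ^ k) • hat x := by
  induction k with
  | zero => simp
  | succ k ih =>
    rw [show 2 * (k + 1) + 1 = (2 * k + 1) + 2 by ring, pow_add, ih, smul_mul_assoc,
      show hat x * hat x ^ 2 = hat x ^ 3 by rw [← pow_succ']]
    rw [hat_cube, smul_smul, ← pow_succ]

lemma hat_pow_even (x : Fin 3 → ℝ) (k : ℕ) :
    (hat x) ^ (2 * (k + 1)) = ((-(∑ i, x i ^ 2)) ^ k) • (hat x) ^ 2 := by
  rw [show 2 * (k + 1) = (2 * k + 1) + 1 by ring, pow_succ, hat_pow_odd, smul_mul_assoc,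
    ← pow_two]

/-- The linear map version of `vee`. -/
noncomputable def veeLin : Matrix (Fin 3) (Fin 3) ℝ →ₗ[ℝ] (Fin 3 → ℝ) where
  toFun := vee
  map_add' A B := by funext i; fin_cases i <;> simp [vee]
  map_smul' c A := by funext i; fin_cases i <;> simp [vee]

lemma sq_enorm3 (x : Fin 3 → ℝ) : ∑ i, x i ^ 2 = enorm3 x ^ 2 := by
  rw [enorm3, sq_sqrt]; positivity

lemma enorm3_smul (s : ℝ) (x : Fin 3 → ℝ) : enorm3 (s • x) = |s| * enorm3 x := by
  rw [enorm3, enorm3, ← Real.sqrt_sq_eq_abs, ← Real.sqrt_mul (sq_nonneg s)]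
  congr 1
  rw [Finset.mul_sum]
  refine Finset.sum_congr rfl fun i _ => ?_
  simp [mul_pow]

set_option maxHeartbeats 1000000 in
lemma trace_exp_hat (x : Fin 3 → ℝ) :
    (NormedSpace.exp (hat x)).trace = 1 + 2 * Real.cos (enorm3 x) := by
  letI : SeminormedRing (Matrix (Fin 3) (Fin 3) ℝ) := Matrix.linftyOpSemiNormedRing
  letI : NormedRing (Matrix (Fin 3) (Fin 3) ℝ) := Matrix.linftyOpNormedRing
  letI : NormedAlgebra ℝ (Matrix (Fin 3) (Fin 3) ℝ) := Matrix.linftyOpNormedAlgebra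
  set θ := enorm3 x with hθdef
  have hc : ∑ i, x i ^ 2 = θ ^ 2 := sq_enorm3 x
  have hs : Summable (fun n : ℕ => ((n ! : ℝ))⁻¹ • (hat x) ^ n) :=
    NormedSpace.expSeries_summable' (hat x)
  have hmap : HasSum (fun n : ℕ => ((n ! : ℝ))⁻¹ * ((hat x) ^ n).trace)
      ((NormedSpace.exp (hat x)).trace) := by
    have h := hs.hasSum.map (Matrix.traceLinearMap (Fin 3) ℝ ℝ).toAddMonoidHom
      (LinearMap.continuous_of_finiteDimensional _)
    rw [show (NormedSpace.exp (hat x)).trace = _ from by rw [NormedSpace.exp_eq_tsum (𝕂 := ℝ)]]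
    convert h using 2 with n
    simp [Matrix.trace_smul]
    rfl
  have heven : HasSum
      (fun k : ℕ => (((2 * k) ! : ℝ))⁻¹ * ((hat x) ^ (2 * k)).trace)
      (2 * Real.cos θ + 1) := by
    have h2 : HasSum (fun k : ℕ => 2 * ((-1 : ℝ) ^ k * θ ^ (2 * k) / ((2 * k)!)))
        (2 * Real.cos θ) := (Real.hasSum_cos θ).mul_left 2
    have h1 : HasSum (fun k : ℕ => if k = 0 then (1 : ℝ) else 0) 1 := hasSum_ite_eq 0 1
    have := h2.add h1
    convert this using 1
    funext k
    cases k with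
    | zero => norm_num [Matrix.trace_one]
    | succ k =>
      rw [hat_pow_even, Matrix.trace_smul, trace_hat_sq, hc, smul_eq_mul, if_neg (Nat.succ_ne_zero k),
        add_zero, neg_pow, ← pow_mul]
      have h0 : (((2 * (k + 1))! : ℝ)) ≠ 0 := by positivity
      field_simp
      ring
  have hodd : HasSum
      (fun k : ℕ => (((2 * k + 1) ! : ℝ))⁻¹ * ((hat x) ^ (2 * k + 1)).trace) 0 := by
    convert (hasSum_zero : HasSum (fun _ : ℕ => (0:ℝ)) 0) using 1
    funext k
    rw [hat_pow_odd, Matrix.trace_smul, trace_hat, smul_zero, mul_zero]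
  have htot := HasSum.even_add_odd (f := fun n : ℕ => ((n ! : ℝ))⁻¹ * ((hat x) ^ n).trace) heven hodd
  rw [add_zero] at htot
  rw [hmap.unique htot]
  ring

set_option maxHeartbeats 1000000 in
lemma vee_exp_sub (x : Fin 3 → ℝ) (hx : enorm3 x ≠ 0) :
    vee (NormedSpace.exp (hat x) - (NormedSpace.exp (hat x))ᵀ)
      = (2 * Real.sin (enorm3 x) / enorm3 x) • x := by
  letI : SeminormedRing (Matrix (Fin 3) (Fin 3) ℝ) := Matrix.linftyOpSemiNormedRing
  letI : NormedRing (Matrix (Fin 3) (Fin 3) ℝ) := Matrix.linftyOpNormedRing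
  letI : NormedAlgebra ℝ (Matrix (Fin 3) (Fin 3) ℝ) := Matrix.linftyOpNormedAlgebra
  set θ := enorm3 x with hθdef
  have hc : ∑ i, x i ^ 2 = θ ^ 2 := sq_enorm3 x
  have htr : (NormedSpace.exp (hat x))ᵀ = NormedSpace.exp (-(hat x)) := by
    rw [← hat_transpose, Matrix.exp_transpose]
  have hs : Summable (fun n : ℕ => ((n ! : ℝ))⁻¹ • (hat x) ^ n) :=
    NormedSpace.expSeries_summable' (hat x)
  have hs' : Summable (fun n : ℕ => ((n ! : ℝ))⁻¹ • (-(hat x)) ^ n) :=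
    NormedSpace.expSeries_summable' (-(hat x))
  have hsub : HasSum (fun n : ℕ => ((n ! : ℝ))⁻¹ • (hat x) ^ n - ((n ! : ℝ))⁻¹ • (-(hat x)) ^ n)
      (NormedSpace.exp (hat x) - NormedSpace.exp (-(hat x))) := by
    have := hs.hasSum.sub hs'.hasSum
    rw [show NormedSpace.exp (hat x) = _ from by rw [NormedSpace.exp_eq_tsum (𝕂 := ℝ)],
      show NormedSpace.exp (-(hat x)) = _ from by rw [NormedSpace.exp_eq_tsum (𝕂 := ℝ)]]
    exact this
  have hmap := hsub.map veeLin.toAddMonoidHom (LinearMap.continuous_of_finiteDimensional _)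
  have heven : HasSum (fun k : ℕ =>
      veeLin (((2 * k) ! : ℝ)⁻¹ • (hat x) ^ (2 * k) - ((2 * k) ! : ℝ)⁻¹ • (-(hat x)) ^ (2 * k)))
      (0 : Fin 3 → ℝ) := by
    convert (hasSum_zero : HasSum (fun _ : ℕ => (0 : Fin 3 → ℝ)) 0) using 1
    funext k
    rw [(even_two_mul k).neg_pow, sub_self, map_zero]
  have hodd : HasSum (fun k : ℕ =>
      veeLin (((2 * k + 1) ! : ℝ)⁻¹ • (hat x) ^ (2 * k + 1)
        - ((2 * k + 1) ! : ℝ)⁻¹ • (-(hat x)) ^ (2 * k + 1)))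
      ((2 * Real.sin θ / θ) • x) := by
    have hsin : HasSum (fun k : ℕ => (2 / θ) * ((-1 : ℝ) ^ k * θ ^ (2 * k + 1) / ((2 * k + 1)!)))
        (2 / θ * Real.sin θ) := (Real.hasSum_sin θ).mul_left (2 / θ)
    have := hsin.smul_const x
    convert this using 1
    · funext k
      rw [(odd_two_mul_add_one k).neg_pow, smul_neg, sub_neg_eq_add, ← two_smul ℝ, smul_smul, LinearMap.map_smul,
        hat_pow_odd, LinearMap.map_smul, show veeLin (hat x) = x from vee_hat x, smul_smul, hc, neg_pow, ← pow_mul]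
      congr 1
      have h0 : (((2 * k + 1)! : ℝ)) ≠ 0 := by positivity
      have hθ2 : θ ^ (2 * k + 1) = θ ^ (2 * k) * θ := pow_succ θ (2 * k)
      field_simp
      ring
    · congr 1
      ring
  have htot := HasSum.even_add_odd (f := fun n : ℕ => veeLin (((n !:ℝ))⁻¹ • (hat x) ^ n - ((n !:ℝ))⁻¹ • (-(hat x)) ^ n)) heven hodd
  rw [zero_add] at htot
  have : vee (NormedSpace.exp (hat x) - NormedSpace.exp (-(hat x)))
      = (2 * Real.sin θ / θ) • x := hmap.unique htot
  rw [htr]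
  exact this

end Aux

/-- The rotation error vector `e_R` of `E = exp (hat x)` has norm `sin (‖x‖/2)`
when `0 < ‖x‖ < π`; in particular `‖e_R‖² = sin² (‖x‖/2)`. -/
theorem norm_rotation_error_vector (x : Fin 3 → ℝ) (h0 : 0 < enorm3 x)
    (hpi : enorm3 x < Real.pi) :
    let E := NormedSpace.exp (hat x)
    let eR := (1 / (2 * Real.sqrt (1 + E.trace))) • vee (E - Eᵀ)
    enorm3 eR = Real.sin (enorm3 x / 2) ∧ enorm3 eR ^ 2 = Real.sin (enorm3 x / 2) ^ 2 := by
  intro E eR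
  set θ := enorm3 x with hθdef
  have hcoshalf : 0 < Real.cos (θ / 2) :=
    Real.cos_pos_of_mem_Ioo ⟨by linarith [Real.pi_pos], by linarith⟩
  have hsinhalf : 0 < Real.sin (θ / 2) :=
    Real.sin_pos_of_pos_of_lt_pi (by linarith) (by linarith [Real.pi_pos])
  have htrace : E.trace = 1 + 2 * Real.cos θ := trace_exp_hat x
  have hveeE : vee (E - Eᵀ) = (2 * Real.sin θ / θ) • x := vee_exp_sub x h0.ne'
  have hsq : 1 + E.trace = (2 * Real.cos (θ / 2)) ^ 2 := by
    rw [htrace]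
    have := Real.cos_sq (θ / 2)
    rw [show 2 * (θ / 2) = θ by ring] at this
    nlinarith [this]
  have hsqrt : Real.sqrt (1 + E.trace) = 2 * Real.cos (θ / 2) := by
    rw [hsq, Real.sqrt_sq (by linarith)]
  have hsinθ : Real.sin θ = 2 * Real.sin (θ / 2) * Real.cos (θ / 2) := by
    rw [show θ = 2 * (θ / 2) by ring, Real.sin_two_mul]
    ring_nf
  have heR : eR = ((1 / (2 * (2 * Real.cos (θ / 2)))) * (2 * Real.sin θ / θ)) • x := by
    show (1 / (2 * Real.sqrt (1 + E.trace))) • vee (E - Eᵀ) = _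
    rw [hveeE, hsqrt, smul_smul]
  have hmain : enorm3 eR = Real.sin (θ / 2) := by
    rw [heR, enorm3_smul, ← hθdef]
    have hval : (1 / (2 * (2 * Real.cos (θ / 2)))) * (2 * Real.sin θ / θ)
        = Real.sin (θ / 2) / θ := by
      rw [hsinθ]
      field_simp
    rw [hval, abs_of_pos (by positivity), div_mul_cancel₀ _ h0.ne']
  exact ⟨hmain, by rw [hmain]⟩
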